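/- (Stability of the distance function.) Let 0 < c₀ < c, a₀ > 0, 0 < d₁ ≤ d₀, T₀ > 0, set T := T₀ + d₀/c, let x, ν ∈ ℝ³, and let f : ℝ → ℝ³ be continuously differentiable with inf_{t∈[0,T]} ‖f t ×₃ ν‖_∞ > 0. Then there exists a constant C₁ > 0, depending only on c, c₀, a₀, d₁, d₀, f, ν and T, such that for all twice continuously differentiable orbits a, ã : ℝ → ℝ³ with ‖deriv a t‖ ≤ c₀, ‖deriv (deriv a) t‖ ≤ a₀, d₁ ≤ ‖x - a t‖ ≤ d₀ (and the same bounds for ã) for all t, the distance functions v(t) := ‖x - a t‖ and ṽ(t) := ‖x - ã t‖ and the tangential fields Hν, H̃ν of the orbits a, ã satisfy sup_{t∈[0,T₀]} |v t − ṽ t| ≤ C₁ · sup_{s∈[0,T]} ‖Hν s − H̃ν s‖_∞. -/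

import Mathlib

noncomputable section

abbrev E3 := EuclideanSpace ℝ (Fin 3)

/-- The cross product on `ℝ³`. -/
def cross3 (u v : E3) : E3 :=
  WithLp.toLp 2 ![u 1 * v 2 - u 2 * v 1, u 2 * v 0 - u 0 * v 2, u 0 * v 1 - u 1 * v 0]

/-- The maximum norm `‖y‖_∞ = maximum over i of |y i|` on `ℝ³`. -/
def ninf (y : E3) : ℝ := ⨆ i : Fin 3, |y i|

lemma abs_apply_le_ninf (y : E3) (i : Fin 3) : |y i| ≤ ninf y :=
  le_ciSup (f := fun j : Fin 3 => |y j|) (Set.Finite.bddAbove (Set.finite_range _)) i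

lemma ninf_le_of (y : E3) (m : ℝ) (h : ∀ i, |y i| ≤ m) : ninf y ≤ m :=
  ciSup_le h

lemma ninf_nonneg (y : E3) : 0 ≤ ninf y :=
  le_trans (abs_nonneg _) (abs_apply_le_ninf y 0)

lemma ninf_eq_max (y : E3) : ninf y = max |y 0| (max |y 1| |y 2|) := by
  refine le_antisymm (ninf_le_of _ _ fun i => ?_) ?_
  · fin_cases i
    · exact le_max_left _ _
    · exact le_trans (le_max_left _ _) (le_max_right _ _)
    · exact le_trans (le_max_right _ _) (le_max_right _ _)
  · exact max_le (abs_apply_le_ninf y 0) (max_le (abs_apply_le_ninf y 1) (abs_apply_le_ninf y 2))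

lemma ninf_smul (r : ℝ) (y : E3) : ninf (r • y) = |r| * ninf y := by
  have h : ∀ i : Fin 3, (r • y) i = r * y i := fun i => rfl
  rw [ninf_eq_max, ninf_eq_max, h 0, h 1, h 2, abs_mul, abs_mul, abs_mul,
    mul_max_of_nonneg _ _ (abs_nonneg r), mul_max_of_nonneg _ _ (abs_nonneg r)]

lemma ninf_sub_le (A B : E3) : |ninf A - ninf B| ≤ ninf (A - B) := by
  have hsub : ∀ (U V : E3) (i : Fin 3), (U - V) i = U i - V i := fun _ _ _ => rfl
  have tri : ∀ U V : E3, ninf U ≤ ninf V + ninf (U - V) := by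
    intro U V
    refine ninf_le_of _ _ fun i => ?_
    calc |U i| = |V i + (U - V) i| := by rw [hsub]; ring_nf
    _ ≤ |V i| + |(U - V) i| := abs_add_le _ _
    _ ≤ ninf V + ninf (U - V) := add_le_add (abs_apply_le_ninf V i) (abs_apply_le_ninf _ i)
  have h1 := tri A B
  have h2 := tri B A
  have hneg : ninf (B - A) = ninf (A - B) := by
    have : B - A = (-1 : ℝ) • (A - B) := by module
    rw [this, ninf_smul]; simp
  rw [hneg] at h2
  rw [abs_le]; constructor <;> linarith

lemma abs_apply_le_norm (y : E3) (i : Fin 3) : |y i| ≤ ‖y‖ := by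
  rw [EuclideanSpace.norm_eq]
  have h1 : |y i| = Real.sqrt (|y i| ^ 2) := by
    rw [Real.sqrt_sq_eq_abs, abs_abs]
  rw [h1]
  apply Real.sqrt_le_sqrt
  have := Finset.single_le_sum (f := fun j => ‖y j‖ ^ 2)
    (fun j _ => by positivity) (Finset.mem_univ i)
  simpa [Real.norm_eq_abs] using this

lemma ninf_le_norm (y : E3) : ninf y ≤ ‖y‖ :=
  ninf_le_of _ _ fun i => abs_apply_le_norm y i

lemma cross3_sub_left (u u' w : E3) : cross3 (u - u') w = cross3 u w - cross3 u' w := by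
  ext i
  have hsub : ∀ (U V : E3) (j : Fin 3), (U - V) j = U j - V j := fun _ _ _ => rfl
  fin_cases i <;> simp [cross3, hsub] <;> ring

lemma ninf_cross3_le (u w : E3) : ninf (cross3 u w) ≤ 2 * ‖w‖ * ‖u‖ := by
  refine ninf_le_of _ _ fun i => ?_
  have hb : ∀ (j k : Fin 3), |u j * w k| ≤ ‖w‖ * ‖u‖ := by
    intro j k
    rw [abs_mul]
    calc |u j| * |w k| ≤ ‖u‖ * ‖w‖ :=
      mul_le_mul (abs_apply_le_norm u j) (abs_apply_le_norm w k) (abs_nonneg _) (norm_nonneg _)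
    _ = ‖w‖ * ‖u‖ := mul_comm _ _
  have key : ∀ a b : ℝ, |a| ≤ ‖w‖ * ‖u‖ → |b| ≤ ‖w‖ * ‖u‖ → |a - b| ≤ 2 * ‖w‖ * ‖u‖ := by
    intro a b ha hb'
    calc |a - b| ≤ |a| + |b| := abs_sub _ _
    _ ≤ 2 * ‖w‖ * ‖u‖ := by nlinarith
  fin_cases i
  · simp only [cross3]
    exact key _ _ (hb 1 2) (hb 2 1)
  · simp only [cross3]
    exact key _ _ (hb 2 0) (hb 0 2)
  · simp only [cross3]
    exact key _ _ (hb 0 1) (hb 1 0)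

lemma lipschitz_ninf_cross3 (w : E3) (u u' : E3) :
    |ninf (cross3 u w) - ninf (cross3 u' w)| ≤ 2 * ‖w‖ * ‖u - u'‖ := by
  calc |ninf (cross3 u w) - ninf (cross3 u' w)| ≤ ninf (cross3 u w - cross3 u' w) :=
        ninf_sub_le _ _
  _ = ninf (cross3 (u - u') w) := by rw [cross3_sub_left]
  _ ≤ 2 * ‖w‖ * ‖u - u'‖ := ninf_cross3_le _ _

section Orbit

variable {c c₀ d₁ d₀ : ℝ} {x : E3} {a : ℝ → E3}

lemma orbit_v_diff (ha : Differentiable ℝ a) (hd₁ : 0 < d₁)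
    (hlo : ∀ t, d₁ ≤ ‖x - a t‖) : Differentiable ℝ (fun t => ‖x - a t‖) := by
  intro t
  have h0 : x - a t ≠ 0 := by
    intro h
    have := hlo t
    rw [h, norm_zero] at this
    linarith
  exact DifferentiableAt.norm ℝ ((differentiableAt_const x).sub (ha t)) h0

lemma orbit_a_lip (ha : Differentiable ℝ a) (hda : ∀ t, ‖deriv a t‖ ≤ c₀) (s t : ℝ) :
    ‖a t - a s‖ ≤ c₀ * |t - s| := by
  have := Convex.norm_image_sub_le_of_norm_deriv_le (f := a) (s := Set.univ)
    (fun u _ => ha u) (fun u _ => hda u) convex_univ (Set.mem_univ s) (Set.mem_univ t)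
  simpa [Real.norm_eq_abs] using this

lemma orbit_v_lip (ha : Differentiable ℝ a) (hda : ∀ t, ‖deriv a t‖ ≤ c₀) (s t : ℝ) :
    |‖x - a t‖ - ‖x - a s‖| ≤ c₀ * |t - s| := by
  have h1 : |‖x - a t‖ - ‖x - a s‖| ≤ ‖(x - a t) - (x - a s)‖ := abs_norm_sub_norm_le _ _
  have h2 : (x - a t) - (x - a s) = a s - a t := by abel
  rw [h2] at h1
  calc |‖x - a t‖ - ‖x - a s‖| ≤ ‖a s - a t‖ := h1
  _ ≤ c₀ * |s - t| := orbit_a_lip ha hda t s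
  _ = c₀ * |t - s| := by rw [abs_sub_comm]

lemma orbit_v_deriv_le (ha : Differentiable ℝ a) (hda : ∀ t, ‖deriv a t‖ ≤ c₀)
    (hd₁ : 0 < d₁) (hlo : ∀ t, d₁ ≤ ‖x - a t‖) (hc₀ : 0 ≤ c₀) (t : ℝ) :
    |deriv (fun r => ‖x - a r‖) t| ≤ c₀ := by
  have hd := (orbit_v_diff ha hd₁ hlo t).hasDerivAt
  have := hd.le_of_lip' hc₀ (Filter.Eventually.of_forall fun y => by
    simpa [Real.norm_eq_abs] using orbit_v_lip (x := x) ha hda t y)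
  simpa [Real.norm_eq_abs] using this

end Orbit

section Phase

variable {c c₀ d₁ d₀ : ℝ} {v : ℝ → ℝ}

lemma phase_hasDerivAt (hv : Differentiable ℝ v) (c : ℝ) (t : ℝ) :
    HasDerivAt (fun r => r + v r / c) (1 + deriv v t / c) t :=
  (hasDerivAt_id t).add (((hv t).hasDerivAt).div_const c)

lemma phase_deriv_pos (hc : 0 < c) (hcc : c₀ < c) (hv' : ∀ t, |deriv v t| ≤ c₀) (t : ℝ) :
    0 < 1 + deriv v t / c := by
  have h1 := (abs_le.1 (hv' t)).1
  have h2 : 0 < c + deriv v t := by linarith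
  have h3 : 0 < (c + deriv v t) / c := div_pos h2 hc
  have h4 : (c + deriv v t) / c = 1 + deriv v t / c := by field_simp
  linarith [h4 ▸ h3]

lemma phase_strictMono (hc : 0 < c) (hcc : c₀ < c) (hv : Differentiable ℝ v)
    (hv' : ∀ t, |deriv v t| ≤ c₀) : StrictMono (fun r => r + v r / c) := by
  apply strictMono_of_deriv_pos
  intro t
  rw [(phase_hasDerivAt hv c t).deriv]
  exact phase_deriv_pos hc hcc hv' t

lemma phase_surjective (hc : 0 < c) (hcc : c₀ < c) (hv : Differentiable ℝ v)
    (hd₁ : 0 < d₁) (hlo : ∀ t, d₁ ≤ v t) (hup : ∀ t, v t ≤ d₀) :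
    Function.Surjective (fun r => r + v r / c) := by
  apply Continuous.surjective
  · exact continuous_id.add (hv.continuous.div_const c)
  · apply Filter.tendsto_atTop_mono (f := fun r : ℝ => r + d₁ / c)
    · intro r
      have h : d₁ / c ≤ v r / c := by gcongr; exact hlo r
      simpa using add_le_add_left h r
    · exact Filter.tendsto_atTop_add_const_right _ _ Filter.tendsto_id
  · apply Filter.tendsto_atBot_mono (f := fun r : ℝ => r + d₀ / c)
    · intro r
      have h : v r / c ≤ d₀ / c := by gcongr; exact hup r
      simpa using add_le_add_left h r
    · exact Filter.tendsto_atBot_add_const_right _ _ Filter.tendsto_id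


lemma phase_inverse (hc : 0 < c) (hcc : c₀ < c) (hv : Differentiable ℝ v)
    (hv' : ∀ t, |deriv v t| ≤ c₀)
    (hd₁ : 0 < d₁) (hlo : ∀ t, d₁ ≤ v t) (hup : ∀ t, v t ≤ d₀) :
    ∃ p : ℝ → ℝ, (∀ t, p (t + v t / c) = t) ∧ (∀ s, p s + v (p s) / c = s) ∧ Monotone p ∧
      (∀ s, HasDerivAt p (1 + deriv v (p s) / c)⁻¹ s) := by
  set φ : ℝ → ℝ := fun r => r + v r / c with hφ
  have hmono : StrictMono φ := phase_strictMono hc hcc hv hv'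
  have hsurj : Function.Surjective φ := phase_surjective hc hcc hv hd₁ hlo hup
  set e := StrictMono.orderIsoOfSurjective φ hmono hsurj with he
  refine ⟨fun s => e.symm s, ?_, ?_, ?_, ?_⟩
  · intro t
    exact StrictMono.orderIsoOfSurjective_symm_apply_self φ hmono hsurj t
  · intro s
    exact StrictMono.orderIsoOfSurjective_self_symm_apply φ hmono hsurj s
  · exact e.symm.monotone
  · intro s
    have hcont : ContinuousAt (fun s => e.symm s) s := (OrderIso.continuous e.symm).continuousAt
    have hD := phase_hasDerivAt hv c (e.symm s)
    refine HasDerivAt.of_local_left_inverse hcont ?_ (ne_of_gt (phase_deriv_pos hc hcc hv' _))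
      (Filter.Eventually.of_forall fun y =>
        StrictMono.orderIsoOfSurjective_self_symm_apply φ hmono hsurj y)
    exact hD

end Phase

lemma ninf_zero : ninf (0 : E3) = 0 := by
  have h : ∀ i : Fin 3, (0 : E3) i = 0 := fun _ => rfl
  rw [ninf_eq_max, h 0, h 1, h 2]
  simp

lemma ninf_neg (y : E3) : ninf (-y) = ninf y := by
  have : -y = (-1 : ℝ) • y := by module
  rw [this, ninf_smul]; simp

lemma ninf_sub_add (A B : E3) : ninf (A - B) ≤ ninf A + ninf B := by
  refine ninf_le_of _ _ fun i => ?_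
  have hsub : (A - B) i = A i - B i := rfl
  calc |(A - B) i| = |A i - B i| := by rw [hsub]
  _ ≤ |A i| + |B i| := abs_sub _ _
  _ ≤ ninf A + ninf B := add_le_add (abs_apply_le_ninf A i) (abs_apply_le_ninf B i)

/-- `Hν` is the tangential field of the orbit `a` (relative to the observation point `x`,
the source profile `f` and the vector `ν`, with wave speed `c`). -/
def tangentialField (c : ℝ) (x : E3) (a f : ℝ → E3) (ν : E3) (Hν : ℝ → E3) : Prop :=
  (∀ s : ℝ, s < ‖x - a 0‖ / c → Hν s = 0) ∧
  (∀ t : ℝ, 0 ≤ t →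
    Hν (t + ‖x - a t‖ / c) =
      (c / (4 * Real.pi * ‖x - a t‖ * (c + deriv (fun r : ℝ => ‖x - a r‖) t))) •
        cross3 (f t) ν)

set_option maxHeartbeats 2000000 in
/-- **Stability of the distance function.** There is a constant `C₁ > 0`,
depending only on `c, c₀, a₀, d₁, d₀, f, ν, T`, such that for any two admissible orbits
`a, a'` the distance functions satisfy
`sup_{t∈[0,T₀]} |v t − v' t| ≤ C₁ · sup_{s∈[0,T]} ‖Hν s − Hν' s‖_∞`. -/
theorem stmt_10 (c c₀ a₀ d₁ d₀ T₀ : ℝ)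
    (hc₀ : 0 < c₀) (hc₀c : c₀ < c) (ha₀ : 0 < a₀)
    (hd₁ : 0 < d₁) (hd₁d₀ : d₁ ≤ d₀) (hT₀ : 0 < T₀)
    (x ν : E3) (f : ℝ → E3) (hf : ContDiff ℝ 1 f)
    (hη : 0 < sInf ((fun t : ℝ => ninf (cross3 (f t) ν)) '' Set.Icc 0 (T₀ + d₀ / c))) :
    ∃ C₁ > (0 : ℝ), ∀ a a' : ℝ → E3,
      ContDiff ℝ 2 a → ContDiff ℝ 2 a' →
      (∀ t : ℝ, ‖deriv a t‖ ≤ c₀) → (∀ t : ℝ, ‖deriv a' t‖ ≤ c₀) →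
      (∀ t : ℝ, ‖deriv (deriv a) t‖ ≤ a₀) → (∀ t : ℝ, ‖deriv (deriv a') t‖ ≤ a₀) →
      (∀ t : ℝ, d₁ ≤ ‖x - a t‖ ∧ ‖x - a t‖ ≤ d₀) →
      (∀ t : ℝ, d₁ ≤ ‖x - a' t‖ ∧ ‖x - a' t‖ ≤ d₀) →
      ∀ Hν Hν' : ℝ → E3,
        tangentialField c x a f ν Hν → tangentialField c x a' f ν Hν' →
        ∀ t ∈ Set.Icc (0 : ℝ) T₀,
          |‖x - a t‖ - ‖x - a' t‖| ≤
            C₁ * sSup ((fun s : ℝ => ninf (Hν s - Hν' s)) '' Set.Icc 0 (T₀ + d₀ / c)) := by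
  have hc : 0 < c := lt_trans hc₀ hc₀c
  have hd₀ : 0 < d₀ := lt_of_lt_of_le hd₁ hd₁d₀
  have hπ : 0 < 4 * Real.pi := by positivity
  set T : ℝ := T₀ + d₀ / c with hT
  have hT0 : 0 < T := by rw [hT]; have : 0 < d₀ / c := div_pos hd₀ hc; linarith
  set n : ℝ → ℝ := fun t => ninf (cross3 (f t) ν) with hn
  set η : ℝ := sInf (n '' Set.Icc 0 T) with hηdef
  have hn0 : ∀ u, 0 ≤ n u := fun u => ninf_nonneg _
  have hηle : ∀ u ∈ Set.Icc (0:ℝ) T, η ≤ n u := by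
    intro u hu
    exact csInf_le ⟨0, fun y hy => by
      obtain ⟨w, _, rfl⟩ := hy; exact hn0 w⟩ (Set.mem_image_of_mem _ hu)
  -- bounds for f and its derivative on [0, T]
  obtain ⟨Mf, hMf⟩ : ∃ C, ∀ u ∈ Set.Icc (0:ℝ) T, ‖f u‖ ≤ C :=
    isCompact_Icc.exists_bound_of_continuousOn hf.continuous.continuousOn
  obtain ⟨Lf, hLf⟩ : ∃ C, ∀ u ∈ Set.Icc (0:ℝ) T, ‖deriv f u‖ ≤ C :=
    isCompact_Icc.exists_bound_of_continuousOn (hf.continuous_deriv le_rfl).continuousOn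
  have hMf0 : 0 ≤ Mf := le_trans (norm_nonneg _) (hMf 0 ⟨le_refl _, hT0.le⟩)
  have hLf0 : 0 ≤ Lf := le_trans (norm_nonneg _) (hLf 0 ⟨le_refl _, hT0.le⟩)
  set M : ℝ := 2 * ‖ν‖ * Mf + 1 with hM
  have hnM : ∀ u ∈ Set.Icc (0:ℝ) T, n u ≤ M := by
    intro u hu
    have h1 := ninf_cross3_le (f u) ν
    have h2 := hMf u hu
    have h3 : (0:ℝ) ≤ 2 * ‖ν‖ := by positivity
    nlinarith [norm_nonneg ν, norm_nonneg (f u)]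
  have hM0 : 0 < M := by nlinarith [norm_nonneg ν]
  have hηM : η ≤ M := le_trans (hηle 0 ⟨le_refl _, hT0.le⟩) (hnM 0 ⟨le_refl _, hT0.le⟩)
  set Ln : ℝ := 2 * ‖ν‖ * Lf with hLn
  have hLn0 : 0 ≤ Ln := by positivity
  have hnLip : ∀ u ∈ Set.Icc (0:ℝ) T, ∀ u' ∈ Set.Icc (0:ℝ) T, |n u - n u'| ≤ Ln * |u - u'| := by
    intro u hu u' hu'
    have h1 := lipschitz_ninf_cross3 ν (f u) (f u')
    have h2 : ‖f u - f u'‖ ≤ Lf * |u - u'| := by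
      have := Convex.norm_image_sub_le_of_norm_deriv_le (f := f) (s := Set.Icc 0 T)
        (fun z _ => hf.differentiable one_ne_zero z) hLf (convex_Icc _ _) hu' hu
      simpa [Real.norm_eq_abs] using this
    have h3 : (0:ℝ) ≤ 2 * ‖ν‖ := by positivity
    calc |n u - n u'| ≤ 2 * ‖ν‖ * ‖f u - f u'‖ := h1
    _ ≤ 2 * ‖ν‖ * (Lf * |u - u'|) := by nlinarith
    _ = Ln * |u - u'| := by rw [hLn]; ring
  -- scalar prefactor bounds
  set lmin : ℝ := c / (4 * Real.pi * d₀ * (c + c₀)) with hlmin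
  set lmax : ℝ := c / (4 * Real.pi * d₁ * (c - c₀)) with hlmax
  have hlminpos : 0 < lmin := by
    apply div_pos hc; positivity
  have hlmaxpos : 0 < lmax := by
    apply div_pos hc
    have : 0 < c - c₀ := by linarith
    positivity
  have lamb : ∀ w dv : ℝ, d₁ ≤ w → w ≤ d₀ → |dv| ≤ c₀ →
      0 < c / (4 * Real.pi * w * (c + dv)) ∧
      lmin ≤ c / (4 * Real.pi * w * (c + dv)) ∧
      c / (4 * Real.pi * w * (c + dv)) ≤ lmax := by
    intro w dv h1 h2 h3
    obtain ⟨h4, h5⟩ := abs_le.1 h3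
    have hw : 0 < w := lt_of_lt_of_le hd₁ h1
    have hcd : 0 < c + dv := by linarith
    have hden : 0 < 4 * Real.pi * w * (c + dv) := by positivity
    refine ⟨div_pos hc hden, ?_, ?_⟩
    · rw [hlmin]
      have hprod : w * (c + dv) ≤ d₀ * (c + c₀) :=
        mul_le_mul h2 (by linarith) hcd.le hd₀.le
      have hbig : 0 < 4 * Real.pi * d₀ * (c + c₀) := by
        have : 0 < c + c₀ := by linarith
        positivity
      apply div_le_div_of_nonneg_left hc.le hden
      nlinarith [Real.pi_pos]
    · rw [hlmax]
      have hden2 : 0 < 4 * Real.pi * d₁ * (c - c₀) := by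
        have : 0 < c - c₀ := by linarith
        positivity
      have hprod : d₁ * (c - c₀) ≤ w * (c + dv) := by
        apply mul_le_mul h1 (by linarith) (by linarith) hw.le
      apply div_le_div_of_nonneg_left hc.le hden2
      nlinarith [Real.pi_pos]
  set δ0 : ℝ := lmin * η with hδ0
  have hδ0pos : 0 < δ0 := mul_pos hlminpos hη
  -- ODE data
  set Klip : ℝ := 4 * Real.pi * c * (lmax * M) * ((M + T * Ln) / η ^ 2) with hKlip
  have hKlippos : 0 < Klip := by
    rw [hKlip]
    apply mul_pos (mul_pos (by positivity) (mul_pos hlmaxpos hM0))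
    refine div_pos ?_ (pow_pos hη 2)
    have := mul_nonneg hT0.le hLn0
    linarith
  set ε1 : ℝ := 4 * Real.pi * d₀ / η with hε1
  have hε1pos : 0 < ε1 := by
    rw [hε1]; exact div_pos (by positivity) hη
  set G : ℝ := ε1 / Klip * Real.exp (Klip * T) with hG
  have hGpos : 0 < G := by
    rw [hG]; exact mul_pos (div_pos hε1pos hKlippos) (Real.exp_pos _)
  set C₁ : ℝ := max (d₀ / δ0) ((c + c₀) * G) + 1 with hC₁
  have hC₁pos : 0 < C₁ := by
    rw [hC₁]
    have h1 : 0 < d₀ / δ0 := div_pos hd₀ hδ0pos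
    have h2 := le_max_left (d₀ / δ0) ((c + c₀) * G)
    linarith
  refine ⟨C₁, hC₁pos, ?_⟩
  intro a a' ha2 ha2' hda hda' _ _ hdist hdist' Hν Hν' htf htf' t ht
  set S : ℝ := sSup ((fun s : ℝ => ninf (Hν s - Hν' s)) '' Set.Icc 0 T) with hSdef
  -- per-orbit facts
  have perOrbit : ∀ (b : ℝ → E3) (Hb : ℝ → E3),
      ContDiff ℝ 2 b → (∀ u, ‖deriv b u‖ ≤ c₀) →
      (∀ u, d₁ ≤ ‖x - b u‖ ∧ ‖x - b u‖ ≤ d₀) →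
      tangentialField c x b f ν Hb →
      ∃ p : ℝ → ℝ,
        (∀ u, p (u + ‖x - b u‖ / c) = u) ∧
        (∀ s, p s + ‖x - b (p s)‖ / c = s) ∧
        Monotone p ∧
        (∀ s, HasDerivAt p (1 + deriv (fun r => ‖x - b r‖) (p s) / c)⁻¹ s) ∧
        (∀ s, ‖x - b 0‖ / c ≤ s → 0 ≤ p s ∧ p s ≤ s) ∧
        (∀ s, ‖x - b 0‖ / c ≤ s →
          ninf (Hb s) = c / (4 * Real.pi * ‖x - b (p s)‖ *
            (c + deriv (fun r => ‖x - b r‖) (p s))) * n (p s)) ∧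
        (∀ s ∈ Set.Icc (0:ℝ) T, ninf (Hb s) ≤ lmax * M) ∧
        (∀ s ∈ Set.Icc (0:ℝ) T, ‖x - b 0‖ / c ≤ s → δ0 ≤ ninf (Hb s)) := by
    intro b Hb hb2 hdb hdistb htfb
    have hbdiff : Differentiable ℝ b := hb2.differentiable (by norm_num)
    have hvdiff : Differentiable ℝ (fun r => ‖x - b r‖) :=
      orbit_v_diff hbdiff hd₁ (fun u => (hdistb u).1)
    have hvder : ∀ u, |deriv (fun r => ‖x - b r‖) u| ≤ c₀ :=
      orbit_v_deriv_le hbdiff hdb hd₁ (fun u => (hdistb u).1) hc₀.le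
    obtain ⟨p, hp1x, hp2x, hpm, hpdx⟩ :=
      phase_inverse (c₀ := c₀) (d₁ := d₁) (d₀ := d₀) hc hc₀c hvdiff hvder hd₁
        (fun u => (hdistb u).1) (fun u => (hdistb u).2)
    have hp1 : ∀ u, p (u + ‖x - b u‖ / c) = u := hp1x
    have hp2 : ∀ s, p s + ‖x - b (p s)‖ / c = s := hp2x
    have hpd : ∀ s, HasDerivAt p (1 + deriv (fun r => ‖x - b r‖) (p s) / c)⁻¹ s := hpdx
    have hrange : ∀ s, ‖x - b 0‖ / c ≤ s → 0 ≤ p s ∧ p s ≤ s := by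
      intro s hs
      have h0 : p (0 + ‖x - b 0‖ / c) = 0 := hp1 0
      have h0' : p (‖x - b 0‖ / c) = 0 := by rwa [zero_add] at h0
      constructor
      · have := hpm hs
        rw [h0'] at this
        exact this
      · have h2 := hp2 s
        have hpos : 0 < ‖x - b (p s)‖ / c := div_pos (lt_of_lt_of_le hd₁ (hdistb _).1) hc
        linarith
    have hrep : ∀ s, ‖x - b 0‖ / c ≤ s →
        Hb s = (c / (4 * Real.pi * ‖x - b (p s)‖ *
          (c + deriv (fun r => ‖x - b r‖) (p s)))) • cross3 (f (p s)) ν := by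
      intro s hs
      have h0 : 0 ≤ p s := (hrange s hs).1
      have h1 := htfb.2 (p s) h0
      rwa [hp2 s] at h1
    have hlampos : ∀ s, 0 < c / (4 * Real.pi * ‖x - b (p s)‖ *
        (c + deriv (fun r => ‖x - b r‖) (p s))) := by
      intro s
      exact (lamb _ _ (hdistb (p s)).1 (hdistb (p s)).2 (hvder (p s))).1
    have hninf : ∀ s, ‖x - b 0‖ / c ≤ s →
        ninf (Hb s) = c / (4 * Real.pi * ‖x - b (p s)‖ *
          (c + deriv (fun r => ‖x - b r‖) (p s))) * n (p s) := by
      intro s hs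
      rw [hrep s hs, ninf_smul, abs_of_pos (hlampos s)]
    refine ⟨p, hp1, hp2, hpm, hpd, hrange, hninf, ?_, ?_⟩
    · intro s hs
      rcases lt_or_ge s (‖x - b 0‖ / c) with hlt | hge
      · rw [htfb.1 s hlt, ninf_zero]
        exact (mul_pos hlmaxpos hM0).le
      · rw [hninf s hge]
        have hmem : p s ∈ Set.Icc (0:ℝ) T := ⟨(hrange s hge).1, le_trans (hrange s hge).2 hs.2⟩
        have h1 := (lamb _ _ (hdistb (p s)).1 (hdistb (p s)).2 (hvder (p s))).2.2
        have h2 := hnM _ hmem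
        exact mul_le_mul h1 h2 (hn0 _) hlmaxpos.le
    · intro s hs hge
      rw [hninf s hge, hδ0]
      have hmem : p s ∈ Set.Icc (0:ℝ) T := ⟨(hrange s hge).1, le_trans (hrange s hge).2 hs.2⟩
      have h1 := (lamb _ _ (hdistb (p s)).1 (hdistb (p s)).2 (hvder (p s))).2.1
      have h2 := hηle _ hmem
      exact mul_le_mul h1 h2 hη.le (hlampos s).le
  obtain ⟨p, hp1, hp2, hpm, hpd, hprange, hpninf, hpbd, hpδ⟩ :=
    perOrbit a Hν ha2 hda hdist htf
  obtain ⟨q, hq1, hq2, hqm, hqd, hqrange, hqninf, hqbd, hqδ⟩ :=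
    perOrbit a' Hν' ha2' hda' hdist' htf'
  -- sup facts
  have hS_bdd : BddAbove ((fun s : ℝ => ninf (Hν s - Hν' s)) '' Set.Icc 0 T) := by
    refine ⟨lmax * M + lmax * M, ?_⟩
    rintro y ⟨s, hs, rfl⟩
    exact le_trans (ninf_sub_add _ _) (add_le_add (hpbd s hs) (hqbd s hs))
  have hSle : ∀ s ∈ Set.Icc (0:ℝ) T, ninf (Hν s - Hν' s) ≤ S := by
    intro s hs
    exact le_csSup hS_bdd ⟨s, hs, rfl⟩
  have hS0 : 0 ≤ S := le_trans (ninf_nonneg _) (hSle 0 ⟨le_refl _, hT0.le⟩)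
  have hCmax1 : d₀ / δ0 ≤ C₁ := by
    rw [hC₁]; have := le_max_left (d₀ / δ0) ((c + c₀) * G); linarith
  have hCmax2 : (c + c₀) * G ≤ C₁ := by
    rw [hC₁]; have := le_max_right (d₀ / δ0) ((c + c₀) * G); linarith
  rcases le_or_gt δ0 S with hbig | hsmall
  · -- trivial case: S is bounded below by a positive constant
    have habs : |‖x - a t‖ - ‖x - a' t‖| ≤ d₀ := by
      have h1 := hdist t; have h2 := hdist' t
      rw [abs_le]; constructor <;> [linarith [h1.1, h2.2]; linarith [h1.2, h2.1]]
    calc |‖x - a t‖ - ‖x - a' t‖| ≤ d₀ := habs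
    _ = (d₀ / δ0) * δ0 := by field_simp
    _ ≤ (d₀ / δ0) * S := by
        apply mul_le_mul_of_nonneg_left hbig (div_pos hd₀ hδ0pos).le
    _ ≤ C₁ * S := mul_le_mul_of_nonneg_right hCmax1 hS0
  · -- main case
    have hd₀cT : d₀ / c ≤ T := by rw [hT]; linarith
    have heq0 : ‖x - a 0‖ = ‖x - a' 0‖ := by
      by_contra hne
      have claim : ∀ (b b' : ℝ → E3) (Hb Hb' : ℝ → E3),
          (∀ s : ℝ, s < ‖x - b 0‖ / c → Hb s = 0) →
          (∀ u, d₁ ≤ ‖x - b u‖ ∧ ‖x - b u‖ ≤ d₀) →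
          (∀ u, d₁ ≤ ‖x - b' u‖ ∧ ‖x - b' u‖ ≤ d₀) →
          (∀ s ∈ Set.Icc (0:ℝ) T, ‖x - b' 0‖ / c ≤ s → δ0 ≤ ninf (Hb' s)) →
          (∀ s ∈ Set.Icc (0:ℝ) T, ninf (Hb s - Hb' s) ≤ S) →
          ‖x - b' 0‖ < ‖x - b 0‖ → False := by
        intro b b' Hb Hb' hz hdb hdb' hδb hvals hlt
        set s : ℝ := (‖x - b' 0‖ / c + ‖x - b 0‖ / c) / 2 with hsdef
        have hs1 : ‖x - b' 0‖ / c < s := by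
          rw [hsdef]
          have : ‖x - b' 0‖ / c < ‖x - b 0‖ / c := by gcongr
          linarith
        have hs2 : s < ‖x - b 0‖ / c := by
          rw [hsdef]
          have : ‖x - b' 0‖ / c < ‖x - b 0‖ / c := by gcongr
          linarith
        have hsmem : s ∈ Set.Icc (0:ℝ) T := by
          constructor
          · have : 0 < ‖x - b' 0‖ / c := div_pos (lt_of_lt_of_le hd₁ (hdb' 0).1) hc
            linarith
          · have h5 : ‖x - b 0‖ / c ≤ d₀ / c := by gcongr; exact (hdb 0).2
            exact le_trans (le_trans hs2.le h5) hd₀cT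
        have h1 : Hb s = 0 := hz s hs2
        have h2 : δ0 ≤ ninf (Hb' s) := hδb s hsmem hs1.le
        have h3 : ninf (Hb s - Hb' s) = ninf (Hb' s) := by
          rw [h1, zero_sub, ninf_neg]
        have h4 := hvals s hsmem
        rw [h3] at h4
        linarith
      rcases lt_or_gt_of_ne hne with hlt | hgt
      · exact claim a' a Hν' Hν htf'.1 hdist' hdist hpδ
          (fun s hs => by
            have : ninf (Hν' s - Hν s) = ninf (Hν s - Hν' s) := by
              rw [← ninf_neg (Hν s - Hν' s)]; congr 1; abel
            rw [this]; exact hSle s hs) hlt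
      · exact claim a a' Hν Hν' htf.1 hdist hdist' hqδ hSle hgt

    -- equal starting times
    set s₀ : ℝ := ‖x - a 0‖ / c with hs₀
    have hs₀' : ‖x - a' 0‖ / c = s₀ := by rw [hs₀, heq0]
    have hs₀pos : 0 < s₀ := by
      rw [hs₀]; exact div_pos (lt_of_lt_of_le hd₁ (hdist 0).1) hc
    have hs₀T : s₀ ≤ T := by
      refine le_trans ?_ hd₀cT
      rw [hs₀]; gcongr; exact (hdist 0).2
    have hvdera : ∀ u, |deriv (fun r => ‖x - a r‖) u| ≤ c₀ :=
      orbit_v_deriv_le (ha2.differentiable (by norm_num)) hda hd₁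
        (fun u => (hdist u).1) hc₀.le
    have hvdera' : ∀ u, |deriv (fun r => ‖x - a' r‖) u| ≤ c₀ :=
      orbit_v_deriv_le (ha2'.differentiable (by norm_num)) hda' hd₁
        (fun u => (hdist' u).1) hc₀.le
    -- clamping function
    set σc : ℝ → ℝ := fun u => max 0 (min u T) with hσ
    have hσmem : ∀ u, σc u ∈ Set.Icc (0:ℝ) T := fun u =>
      ⟨le_max_left _ _, max_le hT0.le (min_le_right _ _)⟩
    have hσid : ∀ u, 0 ≤ u → u ≤ T → σc u = u := by
      intro u h1 h2
      rw [hσ]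
      simp only
      rw [min_eq_left h2, max_eq_right h1]
    have hσlip : ∀ u u', |σc u - σc u'| ≤ |u - u'| := by
      intro u u'
      rw [hσ]
      simp only
      calc |max 0 (min u T) - max 0 (min u' T)|
          = |max (min u T) 0 - max (min u' T) 0| := by
            rw [max_comm (0:ℝ) (min u T), max_comm (0:ℝ) (min u' T)]
      _ ≤ |min u T - min u' T| := abs_max_sub_max_le_abs _ _ _
      _ ≤ max |u - u'| |T - T| := abs_min_sub_min_le_max _ _ _ _
      _ = |u - u'| := by simp
    -- the ODE vector field
    set F : ℝ → ℝ → ℝ := fun s y =>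
      4 * Real.pi * c * ninf (Hν (σc s)) * ((σc s - σc y) / n (σc y)) with hF
    have hnlow : ∀ u, η ≤ n (σc u) := fun u => hηle _ (hσmem u)
    have hnup : ∀ u, n (σc u) ≤ M := fun u => hnM _ (hσmem u)
    have hnpos : ∀ u, 0 < n (σc u) := fun u => lt_of_lt_of_le hη (hnlow u)
    have hσT : ∀ u u', |σc u - σc u'| ≤ T := by
      intro u u'
      have h1 := hσmem u
      have h2 := hσmem u'
      rw [abs_le]; constructor <;> [linarith [h1.1, h2.2]; linarith [h1.2, h2.1]]
    have hFlip : ∀ s, LipschitzWith (Real.toNNReal Klip) (F s) := by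
      intro s
      apply LipschitzWith.of_dist_le_mul
      intro y y'
      rw [Real.dist_eq, Real.dist_eq, Real.coe_toNNReal _ hKlippos.le, hF]
      simp only
      have hfac : 4 * Real.pi * c * ninf (Hν (σc s)) * ((σc s - σc y) / n (σc y)) -
          4 * Real.pi * c * ninf (Hν (σc s)) * ((σc s - σc y') / n (σc y')) =
          4 * Real.pi * c * ninf (Hν (σc s)) *
            ((σc s - σc y) / n (σc y) - (σc s - σc y') / n (σc y')) := by ring
      rw [hfac, abs_mul]
      have hkey : (σc s - σc y) / n (σc y) - (σc s - σc y') / n (σc y') =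
          ((σc s - σc y) * (n (σc y') - n (σc y)) + (σc y' - σc y) * n (σc y)) /
            (n (σc y) * n (σc y')) := by
        field_simp [ne_of_gt (hnpos y), ne_of_gt (hnpos y')]
        ring
      have hnum : |(σc s - σc y) * (n (σc y') - n (σc y)) + (σc y' - σc y) * n (σc y)| ≤
          (T * Ln + M) * |y - y'| := by
        have h1 : |σc s - σc y| ≤ T := hσT s y
        have h2 : |n (σc y') - n (σc y)| ≤ Ln * |σc y' - σc y| :=
          hnLip _ (hσmem y') _ (hσmem y)
        have h3 : |σc y' - σc y| ≤ |y - y'| := by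
          have h := hσlip y' y
          rwa [abs_sub_comm y' y] at h
        have h4 : |n (σc y)| ≤ M := by
          rw [abs_of_nonneg (hn0 _)]; exact hnup y
        calc |(σc s - σc y) * (n (σc y') - n (σc y)) + (σc y' - σc y) * n (σc y)|
            ≤ |(σc s - σc y) * (n (σc y') - n (σc y))| + |(σc y' - σc y) * n (σc y)| :=
              abs_add_le _ _
        _ = |σc s - σc y| * |n (σc y') - n (σc y)| + |σc y' - σc y| * |n (σc y)| := by
              rw [abs_mul, abs_mul]
        _ ≤ T * (Ln * |y - y'|) + |y - y'| * M := by
              have h5 : |n (σc y') - n (σc y)| ≤ Ln * |y - y'| :=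
                le_trans h2 (mul_le_mul_of_nonneg_left h3 hLn0)
              have h6 : 0 ≤ |σc s - σc y| := abs_nonneg _
              have h7 : 0 ≤ |n (σc y') - n (σc y)| := abs_nonneg _
              have h8 : 0 ≤ |σc y' - σc y| := abs_nonneg _
              have h9 : 0 ≤ |n (σc y)| := abs_nonneg _
              have h10 := mul_le_mul h1 h5 h7 hT0.le
              have h11 := mul_le_mul h3 h4 h9 (abs_nonneg _)
              linarith
        _ = (T * Ln + M) * |y - y'| := by ring
      have hden : η ^ 2 ≤ n (σc y) * n (σc y') :=
        le_trans (by rw [sq]) (mul_le_mul (hnlow y) (hnlow y') hη.le (hnpos y).le)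
      have hq : |(σc s - σc y) / n (σc y) - (σc s - σc y') / n (σc y')| ≤
          (T * Ln + M) * |y - y'| / η ^ 2 := by
        rw [hkey, abs_div, abs_of_nonneg (mul_nonneg (hnpos y).le (hnpos y').le)]
        exact div_le_div₀ (by positivity) hnum (pow_pos hη 2) hden
      have hA : |4 * Real.pi * c * ninf (Hν (σc s))| ≤ 4 * Real.pi * c * (lmax * M) := by
        rw [abs_of_nonneg (mul_nonneg (by positivity) (ninf_nonneg _))]
        exact mul_le_mul_of_nonneg_left (hpbd _ (hσmem s)) (by positivity)
      calc |4 * Real.pi * c * ninf (Hν (σc s))| *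
            |(σc s - σc y) / n (σc y) - (σc s - σc y') / n (σc y')|
          ≤ (4 * Real.pi * c * (lmax * M)) * ((T * Ln + M) * |y - y'| / η ^ 2) :=
            mul_le_mul hA hq (abs_nonneg _) (by positivity)
      _ = Klip * |y - y'| := by rw [hKlip]; ring
    -- scalar identity for the exact solutions
    have scalar_id : ∀ w dv np hval ps s : ℝ, d₁ ≤ w → |dv| ≤ c₀ → η ≤ np →
        s - ps = w / c → hval = c / (4 * Real.pi * w * (c + dv)) * np →
        4 * Real.pi * c * hval * ((s - ps) / np) = (1 + dv / c)⁻¹ := by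
      intro w dv np hval ps s h1 h3 h4 h5 h6
      obtain ⟨h7, h8⟩ := abs_le.1 h3
      have hw : 0 < w := lt_of_lt_of_le hd₁ h1
      have hnp : 0 < np := lt_of_lt_of_le hη h4
      have hcd : 0 < c + dv := by linarith
      have hπ0 : Real.pi ≠ 0 := ne_of_gt Real.pi_pos
      rw [h5, h6]
      field_simp [ne_of_gt hw, ne_of_gt hnp, ne_of_gt hcd, ne_of_gt Real.pi_pos]
    -- `p` is an exact solution of the ODE given by `F`
    have hex : ∀ s ∈ Set.Ico s₀ T, F s (p s) =
        (1 + deriv (fun r => ‖x - a r‖) (p s) / c)⁻¹ := by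
      intro s hs
      have h0s : 0 ≤ s := le_trans hs₀pos.le hs.1
      have hsT : s ≤ T := hs.2.le
      have hps := hprange s hs.1
      rw [hF]
      simp only
      rw [hσid s h0s hsT, hσid (p s) hps.1 (le_trans hps.2 hsT)]
      refine scalar_id (‖x - a (p s)‖) _ _ _ (p s) s (hdist (p s)).1 (hvdera (p s)) ?_ ?_ ?_
      · exact hηle _ ⟨hps.1, le_trans hps.2 hsT⟩
      · have := hp2 s; linarith
      · exact hpninf s hs.1
    -- `q` is an approximate solution of the same ODE
    have hap : ∀ s ∈ Set.Ico s₀ T,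
        dist ((1 + deriv (fun r => ‖x - a' r‖) (q s) / c)⁻¹) (F s (q s)) ≤ ε1 * S := by
      intro s hs
      have h0s : 0 ≤ s := le_trans hs₀pos.le hs.1
      have hsT : s ≤ T := hs.2.le
      have hs' : ‖x - a' 0‖ / c ≤ s := le_trans (le_of_eq hs₀') hs.1
      have hqs := hqrange s hs'
      have hqsT : q s ≤ T := le_trans hqs.2 hsT
      have hnq : η ≤ n (q s) := hηle _ ⟨hqs.1, hqsT⟩
      have hid : 4 * Real.pi * c * ninf (Hν' s) * ((s - q s) / n (q s)) =
          (1 + deriv (fun r => ‖x - a' r‖) (q s) / c)⁻¹ := by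
        refine scalar_id (‖x - a' (q s)‖) _ _ _ (q s) s (hdist' (q s)).1 (hvdera' (q s))
          hnq ?_ (hqninf s hs')
        have := hq2 s; linarith
      have hFq : F s (q s) = 4 * Real.pi * c * ninf (Hν s) * ((s - q s) / n (q s)) := by
        rw [hF]
        simp only
        rw [hσid s h0s hsT, hσid (q s) hqs.1 hqsT]
      rw [Real.dist_eq, ← hid, hFq]
      have hfac : 4 * Real.pi * c * ninf (Hν' s) * ((s - q s) / n (q s)) -
          4 * Real.pi * c * ninf (Hν s) * ((s - q s) / n (q s)) =
          4 * Real.pi * c * (ninf (Hν' s) - ninf (Hν s)) * ((s - q s) / n (q s)) := by ring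
      rw [hfac, abs_mul, abs_mul]
      have hb1 : |4 * Real.pi * c| = 4 * Real.pi * c := abs_of_nonneg (by positivity)
      have hb2 : |ninf (Hν' s) - ninf (Hν s)| ≤ S := by
        refine le_trans (ninf_sub_le _ _) ?_
        have : ninf (Hν' s - Hν s) = ninf (Hν s - Hν' s) := by
          rw [← ninf_neg (Hν s - Hν' s)]; congr 1; abel
        rw [this]
        exact hSle s ⟨h0s, hsT⟩
      have hsq : s - q s = ‖x - a' (q s)‖ / c := by have := hq2 s; linarith
      have hb3 : |(s - q s) / n (q s)| ≤ (d₀ / c) / η := by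
        rw [hsq, abs_div]
        have hnum : |‖x - a' (q s)‖ / c| ≤ d₀ / c := by
          rw [abs_of_nonneg (by positivity)]
          gcongr
          exact (hdist' (q s)).2
        have hden : η ≤ |n (q s)| := by rw [abs_of_nonneg (hn0 _)]; exact hnq
        exact div_le_div₀ (by positivity) hnum hη (by rwa [abs_of_nonneg (hn0 _)] at hden ⊢)
      calc |4 * Real.pi * c| * |ninf (Hν' s) - ninf (Hν s)| * |(s - q s) / n (q s)|
          ≤ (4 * Real.pi * c) * S * ((d₀ / c) / η) := by
            rw [hb1]
            refine mul_le_mul (mul_le_mul_of_nonneg_left hb2 (by positivity)) hb3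
              (abs_nonneg _) ?_
            have := mul_nonneg (le_of_lt (show (0:ℝ) < 4 * Real.pi * c by positivity)) hS0
            linarith
      _ = ε1 * S := by
            rw [hε1]
            field_simp
    -- Grönwall
    have hcontp : ContinuousOn p (Set.Icc s₀ T) :=
      (continuous_iff_continuousAt.2 fun s => (hpd s).continuousAt).continuousOn
    have hcontq : ContinuousOn q (Set.Icc s₀ T) :=
      (continuous_iff_continuousAt.2 fun s => (hqd s).continuousAt).continuousOn
    have hinit : dist (p s₀) (q s₀) ≤ 0 := by
      have h1 : p s₀ = 0 := by
        have := hp1 0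
        rwa [zero_add] at this
      have h2 : q s₀ = 0 := by
        have := hq1 0
        rw [zero_add, hs₀'] at this
        exact this
      rw [h1, h2, dist_self]
    have hgron := dist_le_of_approx_trajectories_ODE (v := F) (K := Real.toNNReal Klip)
      hFlip hcontp
      (fun s hs => (hpd s).hasDerivWithinAt)
      (fun s hs => by rw [hex s hs] at *; rw [dist_self])
      hcontq
      (fun s hs => (hqd s).hasDerivWithinAt)
      (fun s hs => hap s hs)
      hinit
    -- bound the Grönwall bound
    have hgb : ∀ u ∈ Set.Icc s₀ T, gronwallBound 0 (Real.toNNReal Klip) (0 + ε1 * S) (u - s₀) ≤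
        G * S := by
      intro u hu
      rw [zero_add, Real.coe_toNNReal _ hKlippos.le,
        gronwallBound_of_K_ne_0 (ne_of_gt hKlippos)]
      simp only
      rw [zero_mul, zero_add]
      have h1 : Klip * (u - s₀) ≤ Klip * T :=
        mul_le_mul_of_nonneg_left (by linarith [hu.1, hu.2, hs₀pos]) hKlippos.le
      have h2 : Real.exp (Klip * (u - s₀)) - 1 ≤ Real.exp (Klip * T) := by
        have := Real.exp_le_exp.2 h1
        linarith
      have h3 : 0 ≤ ε1 * S / Klip := by positivity
      calc ε1 * S / Klip * (Real.exp (Klip * (u - s₀)) - 1)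
          ≤ ε1 * S / Klip * Real.exp (Klip * T) := mul_le_mul_of_nonneg_left h2 h3
      _ = G * S := by rw [hG]; ring
    -- conclusion
    set u : ℝ := t + ‖x - a t‖ / c with hu
    have hpu : p u = t := hp1 t
    have humem : u ∈ Set.Icc s₀ T := by
      constructor
      · by_contra hcon
        push_neg at hcon
        have h1 : p u ≤ p s₀ := hpm hcon.le
        have h2 : p s₀ = 0 := by
          have := hp1 0
          rwa [zero_add] at this
        rw [hpu, h2] at h1
        have ht0 : t = 0 := le_antisymm h1 ht.1
        have : u = s₀ := by
          rw [hu, ht0, zero_add, hs₀]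
        linarith
      · rw [hu, hT]
        have h1 : ‖x - a t‖ / c ≤ d₀ / c := by gcongr; exact (hdist t).2
        linarith [ht.2]
    have hdistpq : |t - q u| ≤ G * S := by
      have h1 := hgron u humem
      have h2 := hgb u humem
      rw [Real.dist_eq, hpu] at h1
      linarith
    have h5 : ‖x - a t‖ = c * (u - t) := by
      rw [hu]
      field_simp
      ring
    have h6 : ‖x - a' (q u)‖ = c * (u - q u) := by
      have h := hq2 u
      have : u - q u = ‖x - a' (q u)‖ / c := by linarith
      rw [this]
      field_simp
    have h7 : |‖x - a' (q u)‖ - ‖x - a' t‖| ≤ c₀ * |q u - t| := by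
      have := orbit_v_lip (x := x) (ha2'.differentiable (by norm_num)) hda' t (q u)
      exact this
    have h8 : |‖x - a t‖ - ‖x - a' (q u)‖| ≤ c * |q u - t| := by
      rw [h5, h6]
      have : c * (u - t) - c * (u - q u) = c * (q u - t) := by ring
      rw [this, abs_mul, abs_of_pos hc]
    have h9 : |q u - t| ≤ G * S := by rwa [abs_sub_comm]
    calc |‖x - a t‖ - ‖x - a' t‖|
        ≤ |‖x - a t‖ - ‖x - a' (q u)‖| + |‖x - a' (q u)‖ - ‖x - a' t‖| := by
          have := abs_sub_le (‖x - a t‖) (‖x - a' (q u)‖) (‖x - a' t‖)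
          linarith
    _ ≤ c * |q u - t| + c₀ * |q u - t| := add_le_add h8 h7
    _ = (c + c₀) * |q u - t| := by ring
    _ ≤ (c + c₀) * (G * S) := by
          apply mul_le_mul_of_nonneg_left h9
          linarith
    _ = ((c + c₀) * G) * S := by ring
    _ ≤ C₁ * S := mul_le_mul_of_nonneg_right hCmax2 hS0
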